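/- The scalar map (a, c) ↦ −c·(a + √(a² + c⁴))/c² for c ≠ 0 (and 0 for c = 0) agrees, for c ≠ 0, with −c·(a + √(a² + c⁴))/c², and if a < 0 whenever c = 0 (the CLF condition), then along any sequence (a_n, c_n) → (a, 0) with a < 0 the formula values converge to 0; i.e., Sontag's formula is continuous at points where c = 0 and a < 0. -/

import Mathlib

/-- Sontag's universal formula `S(a,c) = −c (a + √(a² + σ²))/σ` with `σ = c²` for
`c ≠ 0`, and `S(a,0) = 0`: for `c ≠ 0` it agrees with the closed form, and if
`a < 0`, then along any sequence `(aₙ, cₙ) → (a, 0)` the values `S(aₙ, cₙ)`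
converge to `0`; i.e., Sontag's formula is continuous at `(a, 0)` when `a < 0`. -/
theorem sontag_formula_continuity
    (S : ℝ → ℝ → ℝ)
    (hS : ∀ a c : ℝ, S a c =
      if c = 0 then 0
      else -c * (a + Real.sqrt (a ^ 2 + (c ^ 2) ^ 2)) / c ^ 2) :
    (∀ a c : ℝ, c ≠ 0 →
        S a c = -c * (a + Real.sqrt (a ^ 2 + (c ^ 2) ^ 2)) / c ^ 2) ∧
      (∀ a : ℝ, a < 0 → ∀ an cn : ℕ → ℝ,
        Filter.Tendsto an Filter.atTop (nhds a) →
        Filter.Tendsto cn Filter.atTop (nhds 0) →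
        Filter.Tendsto (fun n => S (an n) (cn n)) Filter.atTop (nhds 0)) := by
  constructor
  · intro a c hc; rw [hS]; simp [hc]
  · intro a ha an cn han hcn
    have key : ∀ b c : ℝ, b < 0 →
        S b c = -c ^ 3 / (Real.sqrt (b ^ 2 + (c ^ 2) ^ 2) - b) := by
      intro b c hb
      have h1 : Real.sqrt (b ^ 2) ≤ Real.sqrt (b ^ 2 + (c ^ 2) ^ 2) :=
        Real.sqrt_le_sqrt (le_add_of_nonneg_right (by positivity))
      have h2 : Real.sqrt (b ^ 2) = -b := by
        rw [Real.sqrt_sq_eq_abs, abs_of_neg hb]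
      have hs : 0 < Real.sqrt (b ^ 2 + (c ^ 2) ^ 2) - b := by nlinarith
      rw [hS]
      by_cases hc : c = 0
      · simp [hc]
      · simp only [hc, if_false]
        have hsq : Real.sqrt (b ^ 2 + (c ^ 2) ^ 2) ^ 2 = b ^ 2 + (c ^ 2) ^ 2 :=
          Real.sq_sqrt (by positivity)
        have hs' : Real.sqrt (b ^ 2 + (c ^ 2) ^ 2) - b ≠ 0 := ne_of_gt hs
        rw [div_eq_div_iff (pow_ne_zero 2 hc) hs']
        linear_combination (-c) * hsq
    have hev : ∀ᶠ n in Filter.atTop, an n < 0 := han (Iio_mem_nhds ha)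
    have h1 : Filter.Tendsto (fun n => -(cn n) ^ 3) Filter.atTop (nhds 0) := by
      have := (hcn.pow 3).neg; simpa using this
    have h2 : Filter.Tendsto
        (fun n => Real.sqrt ((an n) ^ 2 + ((cn n) ^ 2) ^ 2) - an n)
        Filter.atTop (nhds (-a - a)) := by
      have hsq : Filter.Tendsto (fun n => (an n) ^ 2 + ((cn n) ^ 2) ^ 2)
          Filter.atTop (nhds (a ^ 2)) := by
        have := (han.pow 2).add ((hcn.pow 2).pow 2); simpa using this
      have ha2 : Real.sqrt (a ^ 2) = -a := by rw [Real.sqrt_sq_eq_abs, abs_of_neg ha]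
      have := (Real.continuous_sqrt.continuousAt.tendsto.comp hsq).sub han
      simpa [ha2, Function.comp] using this
    have hden : (-a - a : ℝ) ≠ 0 := by linarith
    have hlim := h1.div h2 hden
    simp only [zero_div] at hlim
    refine hlim.congr' (hev.mono fun n hn => ?_)
    simpa using (key (an n) (cn n) hn).symm
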